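/- ℤ × {0, …, N} is a unique expansion set for every N ∈ ℕ: if a_{n,i} ∈ ℂ for n ∈ ℤ, 0 ≤ i ≤ N, and ∑_{n∈ℤ} ∑_{i=0}^N a_{n,i} z^n (log z)^i converges absolutely to 0 for all z in a nonempty open subset of ℂ \ {0}, then all a_{n,i} = 0. -/

import Mathlib

open Complex MeasureTheory Real Filter

noncomputable def logBranch (z : ℂ) : ℂ :=
  Real.log ‖z‖ +
    (if 0 ≤ z.arg then (z.arg : ℝ) else z.arg + 2 * Real.pi) * Complex.I

lemma logBranch_im (z : ℂ) :
    (logBranch z).im = if 0 ≤ z.arg then z.arg else z.arg + 2 * Real.pi := by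
  simp [logBranch]

lemma logBranch_re (z : ℂ) : (logBranch z).re = Real.log ‖z‖ := by
  simp [logBranch]

lemma logBranch_eq (z : ℂ) :
    logBranch z = Complex.log z ∨ logBranch z = Complex.log z + 2 * Real.pi * Complex.I := by
  rw [Complex.log]
  unfold logBranch
  by_cases h : 0 ≤ z.arg
  · left; rw [if_pos h]
  · right; rw [if_neg h]; push_cast; ring

lemma exp_logBranch {z : ℂ} (hz : z ≠ 0) : Complex.exp (logBranch z) = z := by
  rcases logBranch_eq z with h | h <;> rw [h]
  · exact Complex.exp_log hz
  · rw [Complex.exp_add, Complex.exp_log hz]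
    have : Complex.exp (2 * Real.pi * Complex.I) = 1 := by
      simpa using Complex.exp_int_mul_two_pi_mul_I 1
    rw [this, mul_one]

lemma logBranch_im_mem {z : ℂ} (hz : z.im ≠ 0) :
    0 < (logBranch z).im ∧ (logBranch z).im < 2 * Real.pi := by
  have harg : z.arg ≠ 0 := by
    intro h
    rcases Complex.arg_eq_zero_iff.mp h with ⟨_, h2⟩
    exact hz h2
  have h1 := Complex.arg_le_pi z
  have h2 := Complex.neg_pi_lt_arg z
  have hpi := Real.pi_pos
  rw [logBranch_im]
  by_cases h : 0 ≤ z.arg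
  · rw [if_pos h]
    constructor
    · exact lt_of_le_of_ne h (Ne.symm harg)
    · linarith
  · rw [if_neg h]
    push_neg at h
    constructor <;> linarith

lemma logBranch_im_nonneg (z : ℂ) : 0 ≤ (logBranch z).im := by
  have h2 := Complex.neg_pi_lt_arg z
  have hpi := Real.pi_pos
  rw [logBranch_im]
  by_cases h : 0 ≤ z.arg
  · rwa [if_pos h]
  · rw [if_neg h]; push_neg at h; linarith

lemma logBranch_im_lt (z : ℂ) : (logBranch z).im < 2 * Real.pi := by
  have h1 := Complex.arg_le_pi z
  have hpi := Real.pi_pos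
  rw [logBranch_im]
  by_cases h : 0 ≤ z.arg
  · rw [if_pos h]; linarith
  · rw [if_neg h]; push_neg at h; linarith

lemma logBranch_exp {w : ℂ} (h0 : 0 < w.im) (h2 : w.im < 2 * Real.pi) :
    logBranch (Complex.exp w) = w := by
  have hne : Complex.exp w ≠ 0 := Complex.exp_ne_zero w
  have hee : Complex.exp (logBranch (Complex.exp w)) = Complex.exp w := exp_logBranch hne
  rcases Complex.exp_eq_exp_iff_exists_int.mp hee with ⟨k, hk⟩
  have him : (logBranch (Complex.exp w)).im = w.im + k * (2 * Real.pi) := by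
    have := congrArg Complex.im hk
    simpa [Complex.add_im, Complex.mul_im] using this
  have hla := logBranch_im_nonneg (Complex.exp w)
  have hlb := logBranch_im_lt (Complex.exp w)
  have hpi := Real.pi_pos
  have hk0 : k = 0 := by
    rcases lt_trichotomy k 0 with h | h | h
    · have : (k : ℝ) ≤ -1 := by exact_mod_cast (by omega : k ≤ -1)
      nlinarith [him ▸ hla]
    · exact h
    · have : (1 : ℝ) ≤ k := by exact_mod_cast h
      nlinarith [him ▸ hlb]
  rw [hk0] at hk
  simpa using hk


lemma fourier_unique {c : ℤ → ℂ} (hc : Summable fun n => ‖c n‖)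
    (h : ∀ θ : ℝ, ∑' n : ℤ, c n * Complex.exp (n * θ * Complex.I) = 0) :
    ∀ n, c n = 0 := by
  intro n
  set μ : Measure ℝ := volume.restrict (Set.Ioc (0 : ℝ) (2 * π)) with hμ
  set f : ℤ → ℝ → ℂ := fun m θ => c m * Complex.exp (((m - n : ℤ) : ℂ) * θ * Complex.I) with hf
  have hnorm : ∀ m θ, ‖f m θ‖ = ‖c m‖ := by
    intro m θ
    rw [hf]
    simp only [norm_mul, Complex.norm_exp]
    have : (((m - n : ℤ) : ℂ) * θ * Complex.I).re = 0 := by simp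
    rw [this]
    simp
  -- each f m is continuous
  have hcont : ∀ m, Continuous (f m) := by
    intro m
    exact continuous_const.mul (Complex.continuous_exp.comp
      ((continuous_const.mul Complex.continuous_ofReal).mul continuous_const))
  -- tsum of f equals 0 pointwise
  have htsum : ∀ θ : ℝ, ∑' m, f m θ = 0 := by
    intro θ
    have : ∀ m : ℤ, f m θ = c m * Complex.exp ((m : ℂ) * θ * Complex.I)
        * Complex.exp ((-n : ℂ) * θ * Complex.I) := by
      intro m
      rw [hf]
      simp only
      rw [mul_assoc (c m), ← Complex.exp_add]
      congr 1
      push_cast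
      ring
    rw [tsum_congr this, tsum_mul_right, h θ, zero_mul]
  -- interchange
  have hmeas : ∀ m, AEStronglyMeasurable (f m) μ := fun m => (hcont m).aestronglyMeasurable
  have hnn : Summable fun m => ‖c m‖₊ := by
    rw [← NNReal.summable_coe]; simpa using hc
  have hfin : ∑' m, ∫⁻ θ, ‖f m θ‖₊ ∂μ ≠ ⊤ := by
    have : ∀ m, ∫⁻ θ, ‖f m θ‖₊ ∂μ = ‖c m‖₊ * ENNReal.ofReal (2 * π) := by
      intro m
      have : (fun θ => (‖f m θ‖₊ : ENNReal)) = fun _ => (‖c m‖₊ : ENNReal) := by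
        funext θ
        congr 1
        ext
        exact hnorm m θ
      rw [this, lintegral_const, hμ, Measure.restrict_apply MeasurableSet.univ,
        Set.univ_inter, Real.volume_Ioc]
      simp
    rw [tsum_congr this, ENNReal.tsum_mul_right]
    refine ENNReal.mul_ne_top ?_ ENNReal.ofReal_ne_top
    exact ENNReal.tsum_coe_ne_top_iff_summable.mpr hnn
  have hint : ∫ θ, ∑' m, f m θ ∂μ = ∑' m, ∫ θ, f m θ ∂μ := integral_tsum hmeas hfin
  have hzero : ∫ θ, ∑' m, f m θ ∂μ = 0 := by
    rw [show (fun θ => ∑' m, f m θ) = fun _ => (0 : ℂ) from funext htsum]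
    simp
  -- compute individual integrals
  have hI : ∀ m : ℤ, ∫ θ, f m θ ∂μ = if m = n then (2 * π) * c n else 0 := by
    intro m
    have h2pi : (0:ℝ) ≤ 2 * π := by positivity
    have : ∫ θ, f m θ ∂μ = ∫ θ in (0:ℝ)..(2*π), f m θ := by
      rw [intervalIntegral.integral_of_le h2pi]
    rw [this]
    by_cases hm : m = n
    · subst hm
      simp only [hf, sub_self, Int.cast_zero, zero_mul, Complex.exp_zero, mul_one]
      rw [if_pos trivial, intervalIntegral.integral_const, sub_zero, Complex.real_smul]
      push_cast
      ring
    · rw [if_neg hm]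
      have hk : ((m - n : ℤ) : ℂ) * Complex.I ≠ 0 := by
        simp only [ne_eq, mul_eq_zero, Complex.I_ne_zero, or_false, Int.cast_eq_zero]
        omega
      have : ∀ θ : ℝ, f m θ = c m * Complex.exp ((((m - n : ℤ) : ℂ) * Complex.I) * θ) := by
        intro θ; rw [hf]; ring_nf
      rw [intervalIntegral.integral_congr (fun θ _ => this θ),
        intervalIntegral.integral_const_mul, integral_exp_mul_complex hk]
      have he : Complex.exp ((((m - n : ℤ) : ℂ) * Complex.I) * (2*π:ℝ)) = 1 := by
        have := Complex.exp_int_mul_two_pi_mul_I (m - n)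
        rw [← this]
        congr 1
        push_cast
        ring
      rw [he]
      simp
  rw [hzero, tsum_congr hI] at hint
  rw [tsum_eq_single n (fun m hm => by rw [if_neg hm])] at hint
  simp only [if_pos rfl] at hint
  have hpi := Real.pi_pos
  have : (2 * π : ℂ) ≠ 0 := by
    simp only [ne_eq, mul_eq_zero]
    push_neg
    exact ⟨two_ne_zero, by exact_mod_cast hpi.ne'⟩
  field_simp at hint
  simp only [if_true] at hint
  exact (mul_eq_zero.mp hint.symm).resolve_left this


lemma zpow_bound {x r1 r2 : ℝ} (h1 : 0 < r1) (hx1 : r1 ≤ x) (hx2 : x ≤ r2) (n : ℤ) :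
    x ^ n ≤ r1 ^ n + r2 ^ n := by
  have hx : 0 < x := lt_of_lt_of_le h1 hx1
  have h2 : 0 < r2 := lt_of_lt_of_le hx hx2
  rcases le_or_gt 0 n with h | h
  · obtain ⟨m, rfl⟩ := Int.eq_ofNat_of_zero_le h
    have hle : x ^ (m : ℤ) ≤ r2 ^ (m : ℤ) := by
      rw [zpow_natCast, zpow_natCast]
      exact pow_le_pow_left₀ hx.le hx2 m
    have h1n : (0:ℝ) ≤ r1 ^ (m : ℤ) := (zpow_pos h1 _).le
    linarith
  · obtain ⟨m, rfl⟩ : ∃ m : ℕ, n = -(m : ℤ) := ⟨(-n).toNat, by omega⟩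
    have hle : x ^ (-(m:ℤ)) ≤ r1 ^ (-(m:ℤ)) := by
      rw [zpow_neg, zpow_neg, zpow_natCast, zpow_natCast]
      exact inv_anti₀ (pow_pos h1 m) (pow_le_pow_left₀ h1.le hx1 m)
    have h2n : (0:ℝ) ≤ r2 ^ (-(m:ℤ)) := (zpow_pos h2 _).le
    linarith

set_option maxHeartbeats 2000000 in
theorem stmt_6 (N : ℕ) (a : ℤ → Fin (N + 1) → ℂ)
    (U : Set ℂ) (hU : IsOpen U) (hUne : U.Nonempty) (hU0 : (0 : ℂ) ∉ U)
    (habs : ∀ z ∈ U, Summable fun p : ℤ × Fin (N + 1) =>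
      ‖a p.1 p.2 * z ^ p.1 * (logBranch z) ^ (p.2 : ℕ)‖)
    (hsum : ∀ z ∈ U, HasSum
      (fun p : ℤ × Fin (N + 1) => a p.1 p.2 * z ^ p.1 * (logBranch z) ^ (p.2 : ℕ)) 0) :
    ∀ (n : ℤ) (i : Fin (N + 1)), a n i = 0 := by
  classical
  -- pick a point with nonzero imaginary part
  obtain ⟨z0, hz0U, hz0im⟩ : ∃ z0 ∈ U, z0.im ≠ 0 := by
    obtain ⟨u, hu⟩ := hUne
    rcases ne_or_eq u.im 0 with h | h
    · exact ⟨u, hu, h⟩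
    · obtain ⟨ε, hε, hball⟩ := Metric.isOpen_iff.mp hU u hu
      refine ⟨u + (ε/2 : ℝ) * Complex.I, hball ?_, ?_⟩
      · rw [Metric.mem_ball, Complex.dist_eq]
        have : u + (ε/2 : ℝ) * Complex.I - u = ((ε/2 : ℝ) : ℂ) * Complex.I := by ring
        rw [this, norm_mul, Complex.norm_real, Complex.norm_I, mul_one, Real.norm_eq_abs,
          abs_of_pos (by linarith)]
        linarith
      · simp [Complex.add_im, Complex.mul_im, h]
        positivity
  have hz0ne : z0 ≠ 0 := fun h => hz0im (by rw [h]; simp)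
  have habs0 : 0 < ‖z0‖ := norm_pos_iff.mpr hz0ne
  obtain ⟨δ0, hδ0, hball⟩ := Metric.isOpen_iff.mp hU z0 hz0U
  set δ : ℝ := min δ0 (‖z0‖) with hδ
  have hδpos : 0 < δ := lt_min hδ0 habs0
  set t : ℝ := δ / (2 * ‖z0‖) with ht
  have ht0 : 0 < t := by positivity
  have ht1 : t < 1 := by
    rw [ht, div_lt_one (by positivity)]
    have h1 : δ ≤ ‖z0‖ := min_le_right _ _
    linarith
  have htz : t * ‖z0‖ = δ / 2 := by
    rw [ht]; field_simp
  set z1 : ℂ := ((1 - t : ℝ) : ℂ) * z0 with hz1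
  set z2 : ℂ := ((1 + t : ℝ) : ℂ) * z0 with hz2
  set r1 : ℝ := (1 - t) * ‖z0‖ with hr1
  set r2 : ℝ := (1 + t) * ‖z0‖ with hr2
  have hr1pos : 0 < r1 := by
    have h : 0 < 1 - t := by linarith
    rw [hr1]; positivity
  have hr2pos : 0 < r2 := by rw [hr2]; positivity
  have hr1lt : r1 < ‖z0‖ := by rw [hr1]; nlinarith
  have hr2gt : ‖z0‖ < r2 := by rw [hr2]; nlinarith
  have habsz1 : ‖z1‖ = r1 := by
    rw [hz1, norm_mul, Complex.norm_real, Real.norm_eq_abs, abs_of_pos (by linarith)]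
  have habsz2 : ‖z2‖ = r2 := by
    rw [hz2, norm_mul, Complex.norm_real, Real.norm_eq_abs, abs_of_pos (by linarith)]
  have hz1U : z1 ∈ U := by
    apply hball
    rw [Metric.mem_ball, Complex.dist_eq]
    have : z1 - z0 = ((-t : ℝ) : ℂ) * z0 := by rw [hz1]; push_cast; ring
    rw [this, norm_mul, Complex.norm_real, Real.norm_eq_abs, abs_of_neg (by linarith), neg_neg, htz]
    calc δ / 2 < δ := by linarith
    _ ≤ δ0 := min_le_left _ _
  have hz2U : z2 ∈ U := by
    apply hball
    rw [Metric.mem_ball, Complex.dist_eq]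
    have : z2 - z0 = ((t : ℝ) : ℂ) * z0 := by rw [hz2]; push_cast; ring
    rw [this, norm_mul, Complex.norm_real, Real.norm_eq_abs, abs_of_pos ht0, htz]
    calc δ / 2 < δ := by linarith
    _ ≤ δ0 := min_le_left _ _
  have hz1im : z1.im ≠ 0 := by
    rw [hz1, Complex.im_ofReal_mul]
    exact mul_ne_zero (by linarith) hz0im
  have hz2im : z2.im ≠ 0 := by
    rw [hz2, Complex.im_ofReal_mul]
    exact mul_ne_zero (by linarith) hz0im
  -- the strip
  set σ1 : ℝ := Real.log r1 with hσ1
  set σ2 : ℝ := Real.log r2 with hσ2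
  set S : Set ℂ := Complex.re ⁻¹' Set.Ioo σ1 σ2 with hS
  have hSopen : IsOpen S := isOpen_Ioo.preimage Complex.continuous_re
  have hSconn : IsPreconnected S := by
    have : Convex ℝ S := (convex_Ioo σ1 σ2).linear_preimage Complex.reLm
    exact this.isPreconnected
  -- exp(w.re) in (r1, r2) for w in S
  have hexp_mem : ∀ w ∈ S, r1 ≤ Real.exp w.re ∧ Real.exp w.re ≤ r2 := by
    intro w hw
    obtain ⟨h1, h2⟩ := hw
    constructor
    · rw [← Real.exp_log hr1pos]
      exact (Real.exp_lt_exp.mpr h1).le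
    · rw [← Real.exp_log hr2pos]
      exact (Real.exp_lt_exp.mpr h2).le
  -- nonvanishing of logBranch at points with im ≠ 0
  have hLne : ∀ z : ℂ, z.im ≠ 0 → logBranch z ≠ 0 := by
    intro z hz h
    have := (logBranch_im_mem hz).1
    rw [h] at this
    simp at this
  -- summability of the majorant
  have key_summ : ∀ i : Fin (N + 1),
      Summable (fun n : ℤ => ‖a n i‖ * (r1 ^ n + r2 ^ n)) := by
    intro i
    have haux : ∀ z : ℂ, z ∈ U → z.im ≠ 0 →
        Summable (fun n : ℤ => ‖a n i‖ * (‖z‖) ^ n) := by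
      intro z hzU hzim
      have hinj : Function.Injective (fun n : ℤ => ((n, i) : ℤ × Fin (N + 1))) :=
        fun p q h => congrArg Prod.fst h
      have hsm := (habs z hzU).comp_injective hinj
      set L : ℝ := ‖logBranch z‖ with hL
      have hLpos : 0 < L := norm_pos_iff.mpr (hLne z hzim)
      have heq : (fun n : ℤ => ‖a n i‖ * (‖z‖) ^ n)
          = fun n : ℤ => ‖a n i * z ^ n * logBranch z ^ (i : ℕ)‖ * (L ^ (i : ℕ))⁻¹ := by
        funext n
        rw [norm_mul, norm_mul, norm_zpow, norm_pow]
        rw [← hL]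
        field_simp
      rw [heq]
      exact hsm.mul_right _
    have h1 := haux z1 hz1U hz1im
    have h2 := haux z2 hz2U hz2im
    rw [habsz1] at h1
    rw [habsz2] at h2
    exact (h1.add h2).congr (fun n => by ring)
  -- uniform bound on the strip
  have hbound : ∀ (i : Fin (N + 1)) (n : ℤ) (w : ℂ), w ∈ S →
      ‖a n i * Complex.exp ((n : ℂ) * w)‖ ≤ ‖a n i‖ * (r1 ^ n + r2 ^ n) := by
    intro i n w hw
    rw [norm_mul]
    refine mul_le_mul_of_nonneg_left ?_ (norm_nonneg _)
    have hexp : ‖Complex.exp ((n : ℂ) * w)‖ = Real.exp w.re ^ n := by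
      rw [Complex.exp_int_mul, norm_zpow, Complex.norm_exp]
    rw [hexp]
    obtain ⟨hm1, hm2⟩ := hexp_mem w hw
    exact zpow_bound hr1pos hm1 hm2 n
  -- the functions g and G
  set g : Fin (N + 1) → ℂ → ℂ := fun i w => ∑' n : ℤ, a n i * Complex.exp ((n : ℂ) * w)
    with hg
  set G : ℂ → ℂ := fun w => ∑ i : Fin (N + 1), g i w * w ^ (i : ℕ) with hGdef
  have hgdiff : ∀ i, DifferentiableOn ℂ (g i) S := by
    intro i
    refine differentiableOn_tsum_of_summable_norm (key_summ i) ?_ hSopen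
      (fun n w hw => hbound i n w hw)
    intro n
    exact (((differentiable_id.const_mul ((n : ℤ) : ℂ)).cexp).const_mul (a n i)).differentiableOn
  have hGdiff : DifferentiableOn ℂ G S := by
    refine DifferentiableOn.fun_sum fun i _ => (hgdiff i).mul ?_
    exact (differentiable_pow (i : ℕ)).differentiableOn
  have hGan : AnalyticOnNhd ℂ G S := hGdiff.analyticOnNhd hSopen
  -- the open set V where G vanishes
  set V : Set ℂ := Complex.exp ⁻¹' U ∩ {w | 0 < w.im} ∩ {w | w.im < 2 * π} with hV
  have hVopen : IsOpen V :=
    ((hU.preimage Complex.continuous_exp).inter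
      (isOpen_lt continuous_const Complex.continuous_im)).inter
      (isOpen_lt Complex.continuous_im continuous_const)
  have hGV : ∀ w ∈ V, G w = 0 := by
    intro w hw
    obtain ⟨⟨hwU, hwim1⟩, hwim2⟩ := hw
    set z : ℂ := Complex.exp w with hzw
    have hzU : z ∈ U := hwU
    have hlb : logBranch z = w := logBranch_exp hwim1 hwim2
    have hF : Summable (fun p : ℤ × Fin (N + 1) =>
        a p.1 p.2 * z ^ p.1 * logBranch z ^ (p.2 : ℕ)) := (habs z hzU).of_norm
    have hFq : Summable (fun q : Fin (N + 1) × ℤ =>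
        a q.2 q.1 * z ^ q.2 * logBranch z ^ ((q.1 : ℕ))) :=
      hF.prod_symm
    have h0 : ∑' p : ℤ × Fin (N + 1), a p.1 p.2 * z ^ p.1 * logBranch z ^ (p.2 : ℕ) = 0 :=
      (hsum z hzU).tsum_eq
    calc G w = ∑ i : Fin (N + 1), (∑' n : ℤ, a n i * Complex.exp ((n : ℂ) * w)) * w ^ (i : ℕ) :=
          rfl
    _ = ∑ i : Fin (N + 1), ∑' n : ℤ, a n i * z ^ (n : ℤ) * logBranch z ^ (i : ℕ) := by
        refine Finset.sum_congr rfl fun i _ => ?_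
        rw [← tsum_mul_right]
        refine tsum_congr fun n => ?_
        rw [hlb, hzw, ← Complex.exp_int_mul]
    _ = ∑' q : Fin (N + 1) × ℤ, a q.2 q.1 * z ^ q.2 * logBranch z ^ ((q.1 : ℕ)) := by
        have hfib : ∀ j : Fin (N + 1),
            Summable fun n : ℤ => a n j * z ^ n * logBranch z ^ ((j : ℕ)) := by
          intro j
          have hj : Function.Injective (fun n : ℤ => ((j, n) : Fin (N + 1) × ℤ)) :=
            fun p q h => congrArg Prod.snd h
          have h2 := hFq.comp_injective hj
          exact h2
        rw [Summable.tsum_prod' hFq hfib, tsum_fintype]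
    _ = ∑' p : ℤ × Fin (N + 1), a p.1 p.2 * z ^ p.1 * logBranch z ^ (p.2 : ℕ) := by
        rw [← (Equiv.prodComm (Fin (N + 1)) ℤ).tsum_eq (fun p : ℤ × Fin (N + 1) =>
          a p.1 p.2 * z ^ p.1 * logBranch z ^ (p.2 : ℕ))]
        rfl
    _ = 0 := h0
  -- w0
  set w0 : ℂ := logBranch z0 with hw0
  have hw0V : w0 ∈ V := by
    refine ⟨⟨?_, (logBranch_im_mem hz0im).1⟩, (logBranch_im_mem hz0im).2⟩
    show Complex.exp w0 ∈ U
    rw [hw0, exp_logBranch hz0ne]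
    exact hz0U
  have hw0S : w0 ∈ S := by
    constructor
    · rw [hw0, logBranch_re]
      exact Real.log_lt_log hr1pos hr1lt
    · rw [hw0, logBranch_re]
      exact Real.log_lt_log habs0 hr2gt
  -- identity theorem
  have hG0 : Set.EqOn G 0 S := by
    refine hGan.eqOn_zero_of_preconnected_of_eventuallyEq_zero hSconn hw0S ?_
    exact Filter.eventuallyEq_of_mem (hVopen.mem_nhds hw0V) (fun w hw => hGV w hw)
  -- polynomial step: g i w = 0 on S
  have hgzero : ∀ (i : Fin (N + 1)) (w : ℂ), w ∈ S → g i w = 0 := by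
    intro i w hw
    set P : Polynomial ℂ :=
      ∑ j : Fin (N + 1), Polynomial.C (g j w) * Polynomial.X ^ (j : ℕ) with hP
    have hperiod : ∀ (j : Fin (N + 1)) (k : Fin (N + 1)),
        g j (w + (2 * (π : ℂ) * Complex.I) * ((k : ℕ) : ℂ)) = g j w := by
      intro j k
      refine tsum_congr fun n => ?_
      congr 1
      rw [mul_add, Complex.exp_add]
      have : Complex.exp ((n : ℂ) * ((2 * (π : ℂ) * Complex.I) * ((k : ℕ) : ℂ))) = 1 := by
        have h := Complex.exp_int_mul_two_pi_mul_I (n * (k : ℕ))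
        rw [← h]
        congr 1
        push_cast
        ring
      rw [this, mul_one]
    have hmemk : ∀ k : Fin (N + 1),
        w + (2 * (π : ℂ) * Complex.I) * ((k : ℕ) : ℂ) ∈ S := by
      intro k
      have : (w + (2 * (π : ℂ) * Complex.I) * ((k : ℕ) : ℂ)).re = w.re := by
        simp
      show (w + _).re ∈ Set.Ioo σ1 σ2
      rw [this]
      exact hw
    have heval : ∀ k : Fin (N + 1),
        P.eval (w + (2 * (π : ℂ) * Complex.I) * ((k : ℕ) : ℂ)) = 0 := by
      intro k
      set x : ℂ := w + (2 * (π : ℂ) * Complex.I) * ((k : ℕ) : ℂ) with hx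
      have hPe : P.eval x = ∑ j : Fin (N + 1), g j w * x ^ (j : ℕ) := by
        rw [hP, Polynomial.eval_finset_sum]
        refine Finset.sum_congr rfl fun j _ => ?_
        simp
      have hGx : G x = ∑ j : Fin (N + 1), g j w * x ^ (j : ℕ) := by
        rw [hGdef]
        refine Finset.sum_congr rfl fun j _ => ?_
        rw [hx, hperiod j k]
      rw [hPe, ← hGx]
      exact hG0 (hmemk k)
    have hinj : Function.Injective
        (fun k : Fin (N + 1) => w + (2 * (π : ℂ) * Complex.I) * ((k : ℕ) : ℂ)) := by
      intro k1 k2 h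
      simp only [add_right_inj] at h
      have hc : (2 * (π : ℂ) * Complex.I) ≠ 0 := by
        refine mul_ne_zero (mul_ne_zero two_ne_zero ?_) Complex.I_ne_zero
        exact_mod_cast Real.pi_ne_zero
      have : ((k1 : ℕ) : ℂ) = ((k2 : ℕ) : ℂ) := mul_left_cancel₀ hc h
      exact Fin.ext (Nat.cast_injective this)
    have hdeg : P.natDegree < Fintype.card (Fin (N + 1)) := by
      rw [Fintype.card_fin]
      refine lt_of_le_of_lt (Polynomial.natDegree_sum_le_of_forall_le _ _ fun j _ => ?_)
        (Nat.lt_succ_self N)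
      exact le_trans (Polynomial.natDegree_C_mul_X_pow_le _ _) (Nat.le_of_lt_succ j.isLt)
    have hP0 : P = 0 := P.eq_zero_of_natDegree_lt_card_of_eval_eq_zero hinj heval hdeg
    have hcoeff : P.coeff (i : ℕ) = g i w := by
      rw [hP, Polynomial.finset_sum_coeff]
      rw [Finset.sum_eq_single i]
      · simp
      · intro j _ hj
        rw [Polynomial.coeff_C_mul, Polynomial.coeff_X_pow, if_neg, mul_zero]
        exact fun h => hj (Fin.ext h.symm)
      · intro h
        exact absurd (Finset.mem_univ i) h
    rw [← hcoeff, hP0, Polynomial.coeff_zero]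
  -- Fourier step
  intro n i
  set σ0 : ℝ := Real.log (‖z0‖) with hσ0
  have hσ0mem : ((σ0 : ℂ)) ∈ S := by
    show (σ0 : ℂ).re ∈ Set.Ioo σ1 σ2
    rw [Complex.ofReal_re]
    exact ⟨Real.log_lt_log hr1pos hr1lt, Real.log_lt_log habs0 hr2gt⟩
  set c : ℤ → ℂ := fun m => a m i * Complex.exp ((m : ℂ) * (σ0 : ℂ)) with hc
  have hcs : Summable fun m => ‖c m‖ := by
    refine Summable.of_nonneg_of_le (fun m => norm_nonneg _) (fun m => ?_) (key_summ i)
    exact hbound i m (σ0 : ℂ) hσ0mem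
  have hzero : ∀ θ : ℝ, ∑' m : ℤ, c m * Complex.exp ((m : ℂ) * (θ : ℂ) * Complex.I) = 0 := by
    intro θ
    have hwS : ((σ0 : ℂ) + (θ : ℂ) * Complex.I) ∈ S := by
      show ((σ0 : ℂ) + (θ : ℂ) * Complex.I).re ∈ Set.Ioo σ1 σ2
      simp only [Complex.add_re, Complex.ofReal_re, Complex.mul_re, Complex.ofReal_im,
        Complex.I_re, Complex.I_im, mul_zero, mul_one, zero_mul, sub_zero]
      simpa [hS] using hσ0mem
    have hgz := hgzero i _ hwS
    rw [← hgz]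
    refine tsum_congr fun m => ?_
    rw [hc]
    simp only
    rw [mul_assoc (a m i), ← Complex.exp_add]
    congr 2
    ring
  have hcn := fourier_unique hcs hzero n
  rcases mul_eq_zero.mp hcn with h | h
  · exact h
  · exact absurd h (Complex.exp_ne_zero _)
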